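/- Let X be a complex Banach space and let U, V, W be surjective linear isometries of X with ‖U − V‖ < 1/2 and ‖U − W‖ = ‖V U⁻¹ V − W‖ = ‖U − V‖. Then, with K = 2 − 2‖U − V‖ > 1, the operator V + W is invertible, ‖(V + W)⁻¹‖ ≤ 1/K, and ‖V W⁻¹ V − W‖ ≥ K · ‖W − V‖. -/

import Mathlib

/-- The continuous linear map underlying a surjective linear isometry. -/
noncomputable def isoToCLM {X : Type*} [NormedAddCommGroup X] [NormedSpace ℂ X]
    (e : X ≃ₗᵢ[ℂ] X) : X →L[ℂ] X :=
  e.toLinearIsometry.toContinuousLinearMap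

section Aux

variable {X : Type*} [NormedAddCommGroup X] [NormedSpace ℂ X]

lemma isoToCLM_mul_symm (e : X ≃ₗᵢ[ℂ] X) : isoToCLM e * isoToCLM e.symm = 1 := by
  ext x
  simp [isoToCLM]

lemma isoToCLM_symm_mul (e : X ≃ₗᵢ[ℂ] X) : isoToCLM e.symm * isoToCLM e = 1 := by
  ext x
  simp [isoToCLM]

lemma isoToCLM_norm_le (e : X ≃ₗᵢ[ℂ] X) : ‖isoToCLM e‖ ≤ 1 :=
  e.toLinearIsometry.norm_toContinuousLinearMap_le

lemma isoToCLM_trans (e f : X ≃ₗᵢ[ℂ] X) :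
    isoToCLM (e.trans f) = isoToCLM f * isoToCLM e := by
  ext x
  simp [isoToCLM]

end Aux

/-- Property `B(U,V)` for the group of surjective linear isometries of a complex Banach
space: if `‖U − V‖ < 1/2` and `W` satisfies `‖U − W‖ = ‖V U⁻¹ V − W‖ = ‖U − V‖`, then
with `K = 2 − 2‖U − V‖ > 1` the operator `V + W` is invertible, `‖(V+W)⁻¹‖ ≤ 1/K`, and
`‖V W⁻¹ V − W‖ ≥ K ‖W − V‖`. -/
theorem isometry_group_property_B
    {X : Type*} [NormedAddCommGroup X] [NormedSpace ℂ X] [CompleteSpace X]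
    (U V W : X ≃ₗᵢ[ℂ] X)
    (hUV : ‖isoToCLM U - isoToCLM V‖ < 1 / 2)
    (hUW : ‖isoToCLM U - isoToCLM W‖ = ‖isoToCLM U - isoToCLM V‖)
    (hVUV : ‖isoToCLM ((V.trans U.symm).trans V) - isoToCLM W‖
      = ‖isoToCLM U - isoToCLM V‖) :
    1 < 2 - 2 * ‖isoToCLM U - isoToCLM V‖ ∧
    IsUnit (isoToCLM V + isoToCLM W) ∧
    ‖Ring.inverse (isoToCLM V + isoToCLM W)‖ ≤ 1 / (2 - 2 * ‖isoToCLM U - isoToCLM V‖) ∧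
    (2 - 2 * ‖isoToCLM U - isoToCLM V‖) * ‖isoToCLM W - isoToCLM V‖
      ≤ ‖isoToCLM ((V.trans W.symm).trans V) - isoToCLM W‖ := by
  classical
  set a := isoToCLM U with ha
  set b := isoToCLM V with hb
  set c := isoToCLM W with hc
  set a' := isoToCLM U.symm with ha'
  set c' := isoToCLM W.symm with hc'
  set ε := ‖a - b‖ with hε
  have hε0 : 0 ≤ ε := norm_nonneg _
  have hε12 : ε < 1 / 2 := hUV
  have hK1 : 1 < 2 - 2 * ε := by linarith
  have haa' : a * a' = 1 := isoToCLM_mul_symm U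
  have ha'a : a' * a = 1 := isoToCLM_symm_mul U
  have hcc' : c * c' = 1 := isoToCLM_mul_symm W
  have hc'c : c' * c = 1 := isoToCLM_symm_mul W
  have hna' : ‖a'‖ ≤ 1 := isoToCLM_norm_le U.symm
  have hnc : ‖c‖ ≤ 1 := isoToCLM_norm_le W
  -- the perturbation
  set t : X →L[ℂ] X := (2⁻¹ : ℂ) • (a' * ((a - b) + (a - c))) with hts
  have hhalf : ‖(2⁻¹ : ℂ)‖ = 2⁻¹ := by
    rw [norm_inv]
    norm_num
  have htε : ‖t‖ ≤ ε := by
    have h1 : ‖a' * ((a - b) + (a - c))‖ ≤ ‖a'‖ * ‖(a - b) + (a - c)‖ := norm_mul_le _ _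
    have h2 : ‖(a - b) + (a - c)‖ ≤ ε + ε := by
      calc ‖(a - b) + (a - c)‖ ≤ ‖a - b‖ + ‖a - c‖ := norm_add_le _ _
        _ = ε + ε := by rw [hUW]
    have h3 : ‖a' * ((a - b) + (a - c))‖ ≤ 2 * ε := by
      calc ‖a' * ((a - b) + (a - c))‖ ≤ ‖a'‖ * ‖(a - b) + (a - c)‖ := h1
        _ ≤ 1 * (ε + ε) := by
            apply mul_le_mul hna' h2 (norm_nonneg _) zero_le_one
        _ = 2 * ε := by ring
    have h4 : ‖t‖ = 2⁻¹ * ‖a' * ((a - b) + (a - c))‖ := by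
      rw [hts, norm_smul (2⁻¹ : ℂ) (a' * ((a - b) + (a - c))), hhalf]
    calc ‖t‖ = 2⁻¹ * ‖a' * ((a - b) + (a - c))‖ := h4
      _ ≤ 2⁻¹ * (2 * ε) := by linarith [h3]
      _ = ε := by ring
  have ht1 : ‖t‖ < 1 := lt_of_le_of_lt htε (by linarith)
  -- key identity : b + c = 2 • (a * (1 - t))
  have hat : a * t = (2⁻¹ : ℂ) • ((a - b) + (a - c)) := by
    rw [hts, mul_smul_comm, ← mul_assoc, haa', one_mul]
  have key : b + c = (2 : ℂ) • (a * (1 - t)) := by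
    rw [mul_sub, mul_one, hat, smul_sub, smul_smul]
    have h21 : (2 : ℂ) * 2⁻¹ = 1 := by norm_num
    rw [h21, one_smul, two_smul]
    abel
  -- the unit
  set s : X →L[ℂ] X := ↑(Units.oneSub t ht1)⁻¹ with hs
  have hst : (1 - t) * s = 1 := by
    have := (Units.oneSub t ht1).mul_inv
    rwa [Units.val_oneSub] at this
  have hts' : s * (1 - t) = 1 := by
    have := (Units.oneSub t ht1).inv_mul
    rwa [Units.val_oneSub] at this
  set Z : (X →L[ℂ] X)ˣ :=
    { val := b + c
      inv := (2⁻¹ : ℂ) • (s * a')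
      val_inv := by
        rw [key, smul_mul_smul_comm]
        norm_num
        rw [← mul_assoc, mul_assoc a (1 - t) s, hst, mul_one, haa']
      inv_val := by
        rw [key, smul_mul_smul_comm]
        norm_num
        rw [mul_assoc s a' (a * (1 - t)), ← mul_assoc a' a (1 - t), ha'a, one_mul, hts'] } with hZ
  have hunit : IsUnit (b + c) := ⟨Z, rfl⟩
  -- norm of the inverse
  have hsnorm : ‖s‖ ≤ (1 - ε)⁻¹ := by
    have hb1 : ‖s‖ ≤ ‖(1 : X →L[ℂ] X)‖ - 1 + (1 - ‖t‖)⁻¹ := by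
      have : s = ∑' n : ℕ, t ^ n := rfl
      rw [this]
      exact tsum_geometric_le_of_norm_lt_one t ht1
    have hb2 : ‖(1 : X →L[ℂ] X)‖ ≤ 1 := ContinuousLinearMap.norm_id_le
    have hb3 : (1 - ‖t‖)⁻¹ ≤ (1 - ε)⁻¹ := by
      apply inv_anti₀ (by linarith) (by linarith)
    linarith
  have hinv_norm : ‖(↑Z⁻¹ : X →L[ℂ] X)‖ ≤ 1 / (2 - 2 * ε) := by
    have hZi : (↑Z⁻¹ : X →L[ℂ] X) = (2⁻¹ : ℂ) • (s * a') := rfl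
    have h1 : ‖s * a'‖ ≤ (1 - ε)⁻¹ := by
      calc ‖s * a'‖ ≤ ‖s‖ * ‖a'‖ := norm_mul_le _ _
        _ ≤ (1 - ε)⁻¹ * 1 := by
            apply mul_le_mul hsnorm hna' (norm_nonneg _) (inv_nonneg.2 (by linarith))
        _ = (1 - ε)⁻¹ := mul_one _
    have h2 : ‖(↑Z⁻¹ : X →L[ℂ] X)‖ = 2⁻¹ * ‖s * a'‖ := by
      rw [hZi, norm_smul (2⁻¹ : ℂ) (s * a'), hhalf]
    calc ‖(↑Z⁻¹ : X →L[ℂ] X)‖ = 2⁻¹ * ‖s * a'‖ := h2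
      _ ≤ 2⁻¹ * (1 - ε)⁻¹ := by linarith
      _ = 1 / (2 - 2 * ε) := by
          rw [one_div, ← mul_inv]
          ring_nf
  have hRinv : Ring.inverse (b + c) = (↑Z⁻¹ : X →L[ℂ] X) := by
    have : (b + c) = (↑Z : X →L[ℂ] X) := rfl
    rw [this, Ring.inverse_unit]
  -- the final inequality
  have hbcb : isoToCLM ((V.trans W.symm).trans V) = b * c' * b := by
    rw [isoToCLM_trans, isoToCLM_trans, ← hb, ← hc', mul_assoc]
  have expand : (b - c) * c' * (b + c) = b * c' * b - c := by
    rw [sub_mul, sub_mul, mul_add, mul_add, mul_assoc b c' c, hc'c, mul_one, hcc', one_mul,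
      one_mul]
    abel
  have hfac : b - c = (b * c' * b - c) * (↑Z⁻¹ : X →L[ℂ] X) * c := by
    rw [← expand]
    have h1 : (b - c) * c' * (b + c) * (↑Z⁻¹ : X →L[ℂ] X) = (b - c) * c' := by
      rw [mul_assoc]
      have : (b + c) * (↑Z⁻¹ : X →L[ℂ] X) = 1 := Z.mul_inv
      rw [this, mul_one]
    rw [h1, mul_assoc, hc'c, mul_one]
  have hineq : (2 - 2 * ε) * ‖c - b‖ ≤ ‖b * c' * b - c‖ := by
    have h1 : ‖b - c‖ ≤ ‖b * c' * b - c‖ * (1 / (2 - 2 * ε)) := by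
      calc ‖b - c‖ = ‖(b * c' * b - c) * (↑Z⁻¹ : X →L[ℂ] X) * c‖ := by rw [← hfac]
        _ ≤ ‖(b * c' * b - c) * (↑Z⁻¹ : X →L[ℂ] X)‖ * ‖c‖ := norm_mul_le _ _
        _ ≤ ‖(b * c' * b - c) * (↑Z⁻¹ : X →L[ℂ] X)‖ * 1 := by
            apply mul_le_mul_of_nonneg_left hnc (norm_nonneg _)
        _ = ‖(b * c' * b - c) * (↑Z⁻¹ : X →L[ℂ] X)‖ := mul_one _
        _ ≤ ‖b * c' * b - c‖ * ‖(↑Z⁻¹ : X →L[ℂ] X)‖ := norm_mul_le _ _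
        _ ≤ ‖b * c' * b - c‖ * (1 / (2 - 2 * ε)) := by
            apply mul_le_mul_of_nonneg_left hinv_norm (norm_nonneg _)
    have hK0 : 0 < 2 - 2 * ε := by linarith
    have h2 : ‖c - b‖ = ‖b - c‖ := norm_sub_rev _ _
    rw [h2]
    rw [div_eq_mul_inv, one_mul] at h1
    calc (2 - 2 * ε) * ‖b - c‖ ≤ (2 - 2 * ε) * (‖b * c' * b - c‖ * (2 - 2 * ε)⁻¹) :=
          mul_le_mul_of_nonneg_left h1 (by linarith)
      _ = ‖b * c' * b - c‖ := by
          rw [mul_comm, mul_assoc, inv_mul_cancel₀ hK0.ne', mul_one]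
  refine ⟨hK1, hunit, ?_, ?_⟩
  · rw [hRinv]
    exact hinv_norm
  · rw [hbcb]
    exact hineq
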